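/- arXiv:2407.09875 — 2 statements merged into one kernel-verified Lean document; each statement's English description precedes it below -/
import Mathlib

section
/- Let α, α₁, α₂ ∈ ℝ with α ≠ 0 and α·α₂ < 0. For i, j ∈ ℕ and t ∈ ℝ define μ_{i,j}(t) = ∫₀^∞ ∫₀^∞ x^i y^j e^{(i+j)αt} · ((y − x)/(x + y)) · exp((α₁/α)(x + y) e^{αt} + (α₂/(2α))(x² + y²) e^{2αt}) dx dy and β_i(t) = ∫₀^∞ x^i e^{iαt} exp((α₁/α) x e^{αt} + (α₂/(2α)) x² e^{2αt}) dx. Then all integrals converge, all functions are differentiable on ℝ, and for all i, j ∈ ℕ and t ∈ ℝ: μ_{i,j}'(t) = α(i+j) μ_{i,j}(t) + α₁(μ_{i+1,j}(t) + μ_{i,j+1}(t)) + α₂(μ_{i+2,j}(t) + μ_{i,j+2}(t)), β_i'(t) = iα β_i(t) + α₁ β_{i+1}(t) + α₂ β_{i+2}(t), μ_{i,j}'(t) = −2α μ_{i,j}(t), and β_i'(t) = −α β_i(t). -/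
open MeasureTheory

/-- The deformed skew-symmetric bimoments of partial-skew orthogonal polynomials:
`μ_{i,j}(t) = ∬_{(0,∞)²} x^i y^j e^{(i+j)αt} ((y−x)/(x+y))
  exp((α₁/α)(x+y)e^{αt} + (α₂/(2α))(x²+y²)e^{2αt}) dx dy`. -/
noncomputable def skewBimoment (α α₁ α₂ : ℝ) (i j : ℕ) (t : ℝ) : ℝ :=
  ∫ p in (Set.Ioi (0 : ℝ)) ×ˢ (Set.Ioi (0 : ℝ)),
    p.1 ^ i * p.2 ^ j * Real.exp (((i : ℝ) + (j : ℝ)) * α * t)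
      * ((p.2 - p.1) / (p.1 + p.2))
      * Real.exp (α₁ / α * (p.1 + p.2) * Real.exp (α * t)
          + α₂ / (2 * α) * (p.1 ^ 2 + p.2 ^ 2) * Real.exp (2 * α * t))

/-- The deformed single moments:
`β_i(t) = ∫₀^∞ x^i e^{iαt} exp((α₁/α) x e^{αt} + (α₂/(2α)) x² e^{2αt}) dx`. -/
noncomputable def skewSingleMoment (α α₁ α₂ : ℝ) (i : ℕ) (t : ℝ) : ℝ :=
  ∫ x in Set.Ioi (0 : ℝ),
    x ^ i * Real.exp ((i : ℝ) * α * t) *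
      Real.exp (α₁ / α * x * Real.exp (α * t) + α₂ / (2 * α) * x ^ 2 * Real.exp (2 * α * t))

open Set Real

lemma gauss_int {b : ℝ} (hb : b < 0) (k : ℕ) (a : ℝ) :
    IntegrableOn (fun x : ℝ => x ^ k * Real.exp (a * x + b * x ^ 2)) (Set.Ioi 0) := by
  have h2 : (0:ℝ) < -(b/2) := by linarith
  have hk : (-1:ℝ) < (k:ℝ) := lt_of_lt_of_le neg_one_lt_zero (Nat.cast_nonneg k)
  have base := integrableOn_rpow_mul_exp_neg_mul_sq h2 hk
  apply Integrable.mono' (base.const_mul (Real.exp (a^2/(-(2*b)))))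
  · exact (Continuous.aestronglyMeasurable (by continuity))
  · filter_upwards [ae_restrict_mem measurableSet_Ioi] with x hx
    have hx0 : (0:ℝ) ≤ x := le_of_lt hx
    rw [Real.norm_eq_abs, abs_of_nonneg (by positivity)]
    rw [Real.rpow_natCast]
    have key : Real.exp (a * x + b * x ^ 2) ≤ Real.exp (a^2/(-(2*b))) * Real.exp (-(-(b/2)) * x ^ 2) := by
      rw [← Real.exp_add, Real.exp_le_exp]
      have hq : a^2/(-(2*b)) * (-(2*b)) = a^2 := div_mul_cancel₀ _ (by linarith)
      nlinarith [sq_nonneg (b*x + a)]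
    calc x ^ k * Real.exp (a * x + b * x ^ 2)
        ≤ x ^ k * (Real.exp (a^2/(-(2*b))) * Real.exp (-(-(b/2)) * x ^ 2)) := by
          exact mul_le_mul_of_nonneg_left key (by positivity)
      _ = Real.exp (a^2/(-(2*b))) * (x ^ k * Real.exp (-(-(b/2)) * x ^ 2)) := by ring

lemma prod_int {g h : ℝ → ℝ} (hg : IntegrableOn g (Set.Ioi 0))
    (hh : IntegrableOn h (Set.Ioi 0)) :
    IntegrableOn (fun p : ℝ × ℝ => g p.1 * h p.2) ((Set.Ioi (0:ℝ)) ×ˢ (Set.Ioi (0:ℝ))) := by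
  rw [IntegrableOn, Measure.volume_eq_prod, ← Measure.prod_restrict]
  exact hg.mul_prod hh

lemma beta_int {α α₂ : ℝ} (α₁ : ℝ) (hb : α₂/(2*α) < 0) (i : ℕ) (t : ℝ) :
    IntegrableOn (fun x : ℝ => x ^ i * Real.exp ((i : ℝ) * α * t) *
      Real.exp (α₁ / α * x * Real.exp (α * t) + α₂ / (2 * α) * x ^ 2 * Real.exp (2 * α * t)))
      (Set.Ioi 0) := by
  have hb' : α₂/(2*α) * Real.exp (2*α*t) < 0 := mul_neg_of_neg_of_pos hb (Real.exp_pos _)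
  refine IntegrableOn.congr_fun ((gauss_int hb' i (α₁/α * Real.exp (α*t))).const_mul
    (Real.exp ((i:ℝ)*α*t))) ?_ measurableSet_Ioi
  intro x _
  dsimp only
  rw [show α₁/α * Real.exp (α*t) * x + α₂/(2*α) * Real.exp (2*α*t) * x^2
      = α₁ / α * x * Real.exp (α * t) + α₂ / (2 * α) * x ^ 2 * Real.exp (2 * α * t) from by ring]
  ring

lemma mu_int {α α₂ : ℝ} (α₁ : ℝ) (hb : α₂/(2*α) < 0) (i j : ℕ) (t : ℝ) :
    IntegrableOn (fun p : ℝ × ℝ =>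
        p.1 ^ i * p.2 ^ j * Real.exp (((i : ℝ) + (j : ℝ)) * α * t)
          * ((p.2 - p.1) / (p.1 + p.2))
          * Real.exp (α₁ / α * (p.1 + p.2) * Real.exp (α * t)
              + α₂ / (2 * α) * (p.1 ^ 2 + p.2 ^ 2) * Real.exp (2 * α * t)))
      ((Set.Ioi (0:ℝ)) ×ˢ (Set.Ioi (0:ℝ))) := by
  have hb' : α₂/(2*α) * Real.exp (2*α*t) < 0 := mul_neg_of_neg_of_pos hb (Real.exp_pos _)
  set A := α₁/α * Real.exp (α*t) with hA
  set B := α₂/(2*α) * Real.exp (2*α*t) with hB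
  have base := (prod_int (gauss_int hb' i A) (gauss_int hb' j A)).const_mul
    (Real.exp (((i:ℝ)+(j:ℝ))*α*t))
  apply Integrable.mono' base
  · apply Measurable.aestronglyMeasurable
    have m1 : Measurable fun p : ℝ × ℝ => p.1 ^ i := measurable_fst.pow_const i
    have m2 : Measurable fun p : ℝ × ℝ => p.2 ^ j := measurable_snd.pow_const j
    have m4 : Measurable fun p : ℝ × ℝ => (p.2 - p.1) / (p.1 + p.2) :=
      (measurable_snd.sub measurable_fst).div (measurable_fst.add measurable_snd)
    have m5 : Measurable fun p : ℝ × ℝ =>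
        Real.exp (α₁ / α * (p.1 + p.2) * Real.exp (α * t)
          + α₂ / (2 * α) * (p.1 ^ 2 + p.2 ^ 2) * Real.exp (2 * α * t)) :=
      ((((measurable_fst.add measurable_snd).const_mul (α₁/α)).mul_const
          (Real.exp (α*t))).add
        ((((measurable_fst.pow_const 2).add (measurable_snd.pow_const 2)).const_mul
          (α₂/(2*α))).mul_const (Real.exp (2*α*t)))).exp
    exact (((m1.mul m2).mul_const (Real.exp (((i:ℝ)+(j:ℝ))*α*t))).mul m4).mul m5
  · filter_upwards [ae_restrict_mem ((measurableSet_Ioi).prod (measurableSet_Ioi))] with p hp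
    obtain ⟨hx, hy⟩ := hp
    simp only [Set.mem_Ioi] at hx hy
    have hsum : (0:ℝ) < p.1 + p.2 := by linarith
    have hr : |(p.2 - p.1) / (p.1 + p.2)| ≤ 1 := by
      rw [abs_div, abs_of_pos hsum]
      exact div_le_one_of_le₀ (abs_le.mpr ⟨by linarith, by linarith⟩) hsum.le
    have hE : Real.exp (α₁ / α * (p.1 + p.2) * Real.exp (α * t)
        + α₂ / (2 * α) * (p.1 ^ 2 + p.2 ^ 2) * Real.exp (2 * α * t))
        = Real.exp (A * p.1 + B * p.1 ^ 2) * Real.exp (A * p.2 + B * p.2 ^ 2) := by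
      rw [← Real.exp_add, hA, hB]; congr 1; ring
    rw [Real.norm_eq_abs,
      show p.1 ^ i * p.2 ^ j * Real.exp (((i : ℝ) + (j : ℝ)) * α * t)
          * ((p.2 - p.1) / (p.1 + p.2))
          * Real.exp (α₁ / α * (p.1 + p.2) * Real.exp (α * t)
              + α₂ / (2 * α) * (p.1 ^ 2 + p.2 ^ 2) * Real.exp (2 * α * t))
        = (p.1 ^ i * p.2 ^ j * Real.exp (((i : ℝ) + (j : ℝ)) * α * t)
            * Real.exp (α₁ / α * (p.1 + p.2) * Real.exp (α * t)
              + α₂ / (2 * α) * (p.1 ^ 2 + p.2 ^ 2) * Real.exp (2 * α * t)))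
          * ((p.2 - p.1) / (p.1 + p.2)) from by ring,
      abs_mul]
    calc |p.1 ^ i * p.2 ^ j * Real.exp (((i : ℝ) + (j : ℝ)) * α * t)
            * Real.exp (α₁ / α * (p.1 + p.2) * Real.exp (α * t)
              + α₂ / (2 * α) * (p.1 ^ 2 + p.2 ^ 2) * Real.exp (2 * α * t))|
          * |(p.2 - p.1) / (p.1 + p.2)|
        ≤ |p.1 ^ i * p.2 ^ j * Real.exp (((i : ℝ) + (j : ℝ)) * α * t)
            * Real.exp (α₁ / α * (p.1 + p.2) * Real.exp (α * t)
              + α₂ / (2 * α) * (p.1 ^ 2 + p.2 ^ 2) * Real.exp (2 * α * t))| * 1 := by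
          exact mul_le_mul_of_nonneg_left hr (abs_nonneg _)
      _ = Real.exp (((i:ℝ)+(j:ℝ))*α*t)
            * (p.1 ^ i * Real.exp (A * p.1 + B * p.1 ^ 2)
              * (p.2 ^ j * Real.exp (A * p.2 + B * p.2 ^ 2))) := by
          rw [mul_one, abs_of_nonneg (by positivity), hE]; ring

lemma beta_scale (α α₁ α₂ : ℝ) (i : ℕ) (t : ℝ) :
    skewSingleMoment α α₁ α₂ i t = Real.exp (-(α*t)) * skewSingleMoment α α₁ α₂ i 0 := by
  have hc : (0:ℝ) < Real.exp (α*t) := Real.exp_pos _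
  have key := integral_comp_mul_left_Ioi
    (fun u : ℝ => u ^ i * Real.exp (α₁/α * u + α₂/(2*α) * u^2)) 0 hc
  have hfun : (fun x : ℝ => x ^ i * Real.exp ((i : ℝ) * α * t) *
      Real.exp (α₁ / α * x * Real.exp (α * t) + α₂ / (2 * α) * x ^ 2 * Real.exp (2 * α * t)))
      = fun x : ℝ => (Real.exp (α*t) * x) ^ i
          * Real.exp (α₁/α * (Real.exp (α*t) * x) + α₂/(2*α) * (Real.exp (α*t) * x)^2) := by
    funext x
    have h1 : Real.exp ((i:ℝ)*α*t) = Real.exp (α*t) ^ i := by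
      rw [show (i:ℝ)*α*t = (i:ℕ)*(α*t) from by push_cast; ring, Real.exp_nat_mul]
    have h2 : Real.exp (2*α*t) = Real.exp (α*t) ^ 2 := by
      rw [show (2:ℝ)*α*t = (2:ℕ)*(α*t) from by push_cast; ring, Real.exp_nat_mul]
    rw [h1, h2, mul_pow,
      show α₁/α * (Real.exp (α*t) * x) + α₂/(2*α) * (Real.exp (α*t) * x)^2
        = α₁/α * x * Real.exp (α*t) + α₂/(2*α) * x^2 * Real.exp (α*t)^2 from by ring]
    ring
  have h0 : skewSingleMoment α α₁ α₂ i 0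
      = ∫ u in Set.Ioi (0:ℝ), u ^ i * Real.exp (α₁/α * u + α₂/(2*α) * u^2) := by
    unfold skewSingleMoment
    norm_num
  rw [skewSingleMoment, hfun, key, h0, mul_zero, Real.exp_neg, smul_eq_mul]

lemma mu_scale {α α₂ : ℝ} (α₁ : ℝ) (hb : α₂/(2*α) < 0) (i j : ℕ) (t : ℝ) :
    skewBimoment α α₁ α₂ i j t = Real.exp (-(2*α*t)) * skewBimoment α α₁ α₂ i j 0 := by
  have hc : (0:ℝ) < Real.exp (α*t) := Real.exp_pos _
  set c := Real.exp (α*t) with hcdef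
  set G : ℝ → ℝ → ℝ := fun u v => u ^ i * v ^ j * ((v - u)/(u + v))
      * Real.exp (α₁/α * (u + v) + α₂/(2*α) * (u^2 + v^2)) with hG
  have hfun : ∀ x y : ℝ, x ^ i * y ^ j * Real.exp (((i : ℝ) + (j : ℝ)) * α * t)
      * ((y - x) / (x + y))
      * Real.exp (α₁ / α * (x + y) * Real.exp (α * t)
          + α₂ / (2 * α) * (x ^ 2 + y ^ 2) * Real.exp (2 * α * t))
      = G (c * x) (c * y) := by
    intro x y
    have h1 : Real.exp (((i:ℝ)+(j:ℝ))*α*t) = c ^ i * c ^ j := by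
      rw [hcdef, ← pow_add, show ((i:ℝ)+(j:ℝ))*α*t = ((i+j:ℕ))*(α*t) from by push_cast; ring,
        Real.exp_nat_mul]
    have h2 : Real.exp (2*α*t) = c^2 := by
      rw [hcdef, show (2:ℝ)*α*t = (2:ℕ)*(α*t) from by push_cast; ring, Real.exp_nat_mul]
    have h3 : (c*y - c*x)/(c*x + c*y) = (y - x)/(x + y) := by
      rw [show c*y - c*x = c * (y - x) from by ring, show c*x + c*y = c * (x + y) from by ring,
        mul_div_mul_left _ _ (ne_of_gt hc)]
    rw [hG]
    dsimp only
    rw [mul_pow, mul_pow, h3, h1, h2,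
      show α₁/α * (c*x + c*y) + α₂/(2*α) * ((c*x)^2 + (c*y)^2)
        = α₁/α * (x+y) * c + α₂/(2*α) * (x^2+y^2) * c^2 from by ring]
    ring
  have hint_t := mu_int (α := α) (α₂ := α₂) α₁ hb i j t
  have hint_0 := mu_int (α := α) (α₂ := α₂) α₁ hb i j 0
  have hG0 : ∀ x y : ℝ, x ^ i * y ^ j * Real.exp (((i : ℝ) + (j : ℝ)) * α * 0)
      * ((y - x) / (x + y))
      * Real.exp (α₁ / α * (x + y) * Real.exp (α * 0)
          + α₂ / (2 * α) * (x ^ 2 + y ^ 2) * Real.exp (2 * α * 0)) = G x y := by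
    intro x y; rw [hG]; norm_num
  -- rewrite both sides via iterated integrals
  rw [skewBimoment, skewBimoment, Measure.volume_eq_prod]
  rw [setIntegral_prod _ (by rw [← Measure.volume_eq_prod]; exact hint_t),
      setIntegral_prod _ (by rw [← Measure.volume_eq_prod]; exact hint_0)]
  have inner_eq : ∀ x : ℝ, (∫ y in Set.Ioi (0:ℝ),
        x ^ i * y ^ j * Real.exp (((i : ℝ) + (j : ℝ)) * α * t) * ((y - x) / (x + y))
        * Real.exp (α₁ / α * (x + y) * Real.exp (α * t)
            + α₂ / (2 * α) * (x ^ 2 + y ^ 2) * Real.exp (2 * α * t)))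
      = c⁻¹ * ∫ v in Set.Ioi (0:ℝ), G (c * x) v := by
    intro x
    have := integral_comp_mul_left_Ioi (fun v => G (c*x) v) 0 hc
    rw [mul_zero] at this
    rw [show (fun y : ℝ => x ^ i * y ^ j * Real.exp (((i : ℝ) + (j : ℝ)) * α * t)
        * ((y - x) / (x + y))
        * Real.exp (α₁ / α * (x + y) * Real.exp (α * t)
            + α₂ / (2 * α) * (x ^ 2 + y ^ 2) * Real.exp (2 * α * t)))
      = fun y : ℝ => G (c * x) (c * y) from funext fun y => hfun x y, this, smul_eq_mul]
  simp_rw [inner_eq]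
  rw [integral_const_mul]
  have outer := integral_comp_mul_left_Ioi (fun u => ∫ v in Set.Ioi (0:ℝ), G u v) 0 hc
  rw [mul_zero, smul_eq_mul] at outer
  rw [outer]
  simp_rw [hG0]
  rw [Real.exp_neg, ← mul_assoc]
  congr 1
  rw [hcdef, show (2:ℝ)*α*t = (2:ℕ)*(α*t) from by push_cast; ring, Real.exp_nat_mul]
  rw [← mul_inv]
  congr 1
  ring

lemma beta_deriv (α α₁ α₂ : ℝ) (hα : α ≠ 0) (hb : α₂/(2*α) < 0) (i : ℕ) (t₀ : ℝ) :
    HasDerivAt (fun u => skewSingleMoment α α₁ α₂ i u)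
      ((i : ℝ) * α * skewSingleMoment α α₁ α₂ i t₀
        + α₁ * skewSingleMoment α α₁ α₂ (i + 1) t₀
        + α₂ * skewSingleMoment α α₁ α₂ (i + 2) t₀) t₀ := by
  set F : ℝ → ℝ → ℝ := fun u x => x ^ i * Real.exp ((i : ℝ) * α * u) *
      Real.exp (α₁ / α * x * Real.exp (α * u) + α₂ / (2 * α) * x ^ 2 * Real.exp (2 * α * u))
    with hF
  set F' : ℝ → ℝ → ℝ := fun u x =>
      ((i : ℝ) * α + α₁ * x * Real.exp (α * u) + α₂ * x ^ 2 * Real.exp (2 * α * u)) * F u x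
    with hF'
  set M : ℝ := Real.exp (|α| * (|t₀| + 1)) with hM
  have hM1 : (1:ℝ) ≤ M := by
    rw [hM, ← Real.exp_zero]
    exact Real.exp_le_exp.mpr (by positivity)
  set A : ℝ := |α₁ / α| * M with hA
  set Bq : ℝ := α₂ / (2 * α) * (M ^ 2)⁻¹ with hBq
  have hBq0 : Bq < 0 := mul_neg_of_neg_of_pos hb (by positivity)
  set C0 : ℝ := Real.exp ((i : ℝ) * (|α| * (|t₀| + 1))) with hC0
  set bound : ℝ → ℝ := fun x => C0 * (((i : ℝ) * |α|) * (x ^ i * Real.exp (A * x + Bq * x ^ 2))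
      + (|α₁| * M) * (x ^ (i + 1) * Real.exp (A * x + Bq * x ^ 2))
      + (|α₂| * M ^ 2) * (x ^ (i + 2) * Real.exp (A * x + Bq * x ^ 2))) with hbound
  -- basic exponential estimates on the ball
  have ball_est : ∀ u ∈ Metric.ball t₀ 1,
      Real.exp (α * u) ≤ M ∧ Real.exp (2 * α * u) ≤ M ^ 2 ∧
      (M ^ 2)⁻¹ ≤ Real.exp (2 * α * u) ∧ Real.exp ((i : ℝ) * α * u) ≤ C0 := by
    intro u hu
    have hud : |u - t₀| < 1 := by
      rw [Metric.mem_ball, Real.dist_eq] at hu; exact hu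
    have hu' : |u| ≤ |t₀| + 1 := by
      calc |u| = |(u - t₀) + t₀| := by ring_nf
        _ ≤ |u - t₀| + |t₀| := abs_add_le _ _
        _ ≤ |t₀| + 1 := by linarith
    have h1 : α * u ≤ |α| * (|t₀| + 1) := by
      calc α * u ≤ |α * u| := le_abs_self _
        _ = |α| * |u| := abs_mul _ _
        _ ≤ |α| * (|t₀| + 1) := mul_le_mul_of_nonneg_left hu' (abs_nonneg _)
    have h1' : -(|α| * (|t₀| + 1)) ≤ α * u := by
      have : -(α * u) ≤ |α| * (|t₀| + 1) := by
        calc -(α * u) ≤ |α * u| := neg_le_abs _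
          _ = |α| * |u| := abs_mul _ _
          _ ≤ |α| * (|t₀| + 1) := mul_le_mul_of_nonneg_left hu' (abs_nonneg _)
      linarith
    refine ⟨Real.exp_le_exp.mpr h1, ?_, ?_, ?_⟩
    · rw [hM, show (Real.exp (|α| * (|t₀| + 1))) ^ 2
        = Real.exp ((2:ℕ) * (|α| * (|t₀| + 1))) from (Real.exp_nat_mul _ 2).symm]
      exact Real.exp_le_exp.mpr (by push_cast; linarith)
    · rw [hM, show (Real.exp (|α| * (|t₀| + 1))) ^ 2
        = Real.exp ((2:ℕ) * (|α| * (|t₀| + 1))) from (Real.exp_nat_mul _ 2).symm,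
        ← Real.exp_neg]
      exact Real.exp_le_exp.mpr (by push_cast; linarith)
    · rw [hC0]
      refine Real.exp_le_exp.mpr ?_
      rw [mul_assoc]
      exact mul_le_mul_of_nonneg_left h1 (Nat.cast_nonneg i)
  have h_diff : ∀ x : ℝ, ∀ u : ℝ, HasDerivAt (fun u => F u x) (F' u x) u := by
    intro x u
    have hG : HasDerivAt (fun u => α₁ / α * x * Real.exp (α * u)
        + α₂ / (2 * α) * x ^ 2 * Real.exp (2 * α * u))
        (α₁ / α * x * (Real.exp (α * u) * α)
          + α₂ / (2 * α) * x ^ 2 * (Real.exp (2 * α * u) * (2 * α))) u := by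
      have d1 : HasDerivAt (fun u : ℝ => α * u) α u := by
        simpa using (hasDerivAt_id u).const_mul α
      have d2 : HasDerivAt (fun u : ℝ => 2 * α * u) (2 * α) u := by
        simpa using (hasDerivAt_id u).const_mul (2 * α)
      exact ((d1.exp.const_mul (α₁ / α * x)).add (d2.exp.const_mul (α₂ / (2 * α) * x ^ 2))).congr_deriv
        (by ring)
    have d3 : HasDerivAt (fun u : ℝ => (i : ℝ) * α * u) ((i : ℝ) * α) u := by
      simpa using (hasDerivAt_id u).const_mul ((i : ℝ) * α)
    have main := (d3.exp.const_mul (x ^ i)).mul hG.exp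
    rw [hF', hF]
    refine main.congr_deriv ?_
    dsimp only
    field_simp
    ring
  have hFk_int : ∀ (k : ℕ) (t : ℝ), IntegrableOn (fun x : ℝ => x ^ k * Real.exp ((k : ℝ) * α * t) *
      Real.exp (α₁ / α * x * Real.exp (α * t) + α₂ / (2 * α) * x ^ 2 * Real.exp (2 * α * t)))
      (Set.Ioi 0) := fun k t => beta_int α₁ hb k t
  have bound_int : IntegrableOn bound (Set.Ioi 0) := by
    rw [hbound]
    exact ((((gauss_int hBq0 i A).const_mul _).add
      ((gauss_int hBq0 (i+1) A).const_mul _)).add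
      ((gauss_int hBq0 (i+2) A).const_mul _)).const_mul C0
  have h_bound : ∀ᵐ x ∂(volume.restrict (Set.Ioi (0:ℝ))), ∀ u ∈ Metric.ball t₀ 1,
      ‖F' u x‖ ≤ bound x := by
    filter_upwards [ae_restrict_mem measurableSet_Ioi] with x hx
    intro u hu
    obtain ⟨e1, e2, e3, e4⟩ := ball_est u hu
    have hx0 : (0:ℝ) < x := hx
    have hφ : |(i : ℝ) * α + α₁ * x * Real.exp (α * u) + α₂ * x ^ 2 * Real.exp (2 * α * u)|
        ≤ (i : ℝ) * |α| + |α₁| * M * x + |α₂| * M ^ 2 * x ^ 2 := by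
      have t1 : |(i:ℝ) * α| = (i:ℝ) * |α| := by
        rw [abs_mul, abs_of_nonneg (Nat.cast_nonneg i)]
      have t2 : |α₁ * x * Real.exp (α * u)| ≤ |α₁| * M * x := by
        rw [abs_mul, abs_mul, abs_of_pos hx0, abs_of_pos (Real.exp_pos _)]
        nlinarith [mul_nonneg (mul_nonneg (abs_nonneg α₁) hx0.le) (sub_nonneg.mpr e1)]
      have t3 : |α₂ * x ^ 2 * Real.exp (2 * α * u)| ≤ |α₂| * M ^ 2 * x ^ 2 := by
        rw [abs_mul, abs_mul, abs_of_pos (by positivity : (0:ℝ) < x ^ 2),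
          abs_of_pos (Real.exp_pos _)]
        nlinarith [mul_nonneg (mul_nonneg (abs_nonneg α₂) (sq_nonneg x)) (sub_nonneg.mpr e2)]
      calc |(i : ℝ) * α + α₁ * x * Real.exp (α * u) + α₂ * x ^ 2 * Real.exp (2 * α * u)|
          ≤ |(i : ℝ) * α| + |α₁ * x * Real.exp (α * u)| + |α₂ * x ^ 2 * Real.exp (2 * α * u)| :=
            abs_add_three _ _ _
        _ ≤ (i : ℝ) * |α| + |α₁| * M * x + |α₂| * M ^ 2 * x ^ 2 := by
            rw [t1]; gcongr
    have hFb : F u x ≤ C0 * (x ^ i * Real.exp (A * x + Bq * x ^ 2)) := by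
      rw [hF]
      dsimp only
      have hexp : Real.exp (α₁ / α * x * Real.exp (α * u) + α₂ / (2 * α) * x ^ 2
          * Real.exp (2 * α * u)) ≤ Real.exp (A * x + Bq * x ^ 2) := by
        refine Real.exp_le_exp.mpr ?_
        have s1 : α₁ / α * x * Real.exp (α * u) ≤ A * x := by
          rw [hA]
          nlinarith [mul_nonneg (mul_nonneg (sub_nonneg.mpr (le_abs_self (α₁/α))) hx0.le)
              (Real.exp_pos (α * u)).le,
            mul_nonneg (mul_nonneg (abs_nonneg (α₁/α)) hx0.le) (sub_nonneg.mpr e1)]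
        have s2 : α₂ / (2 * α) * x ^ 2 * Real.exp (2 * α * u) ≤ Bq * x ^ 2 := by
          rw [hBq]
          nlinarith [mul_nonneg (mul_nonneg (neg_nonneg.mpr hb.le) (sq_nonneg x))
            (sub_nonneg.mpr e3)]
        linarith
      calc x ^ i * Real.exp ((i : ℝ) * α * u) * Real.exp (α₁ / α * x * Real.exp (α * u)
            + α₂ / (2 * α) * x ^ 2 * Real.exp (2 * α * u))
          ≤ x ^ i * C0 * Real.exp (A * x + Bq * x ^ 2) := by
            have := mul_le_mul (mul_le_mul_of_nonneg_left e4 (by positivity : (0:ℝ) ≤ x ^ i))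
              hexp (Real.exp_pos _).le (by positivity)
            exact this
        _ = C0 * (x ^ i * Real.exp (A * x + Bq * x ^ 2)) := by ring
    have hF0 : 0 ≤ F u x := by rw [hF]; positivity
    rw [hF', Real.norm_eq_abs, abs_mul, abs_of_nonneg hF0]
    calc |(i : ℝ) * α + α₁ * x * Real.exp (α * u) + α₂ * x ^ 2 * Real.exp (2 * α * u)| * F u x
        ≤ ((i : ℝ) * |α| + |α₁| * M * x + |α₂| * M ^ 2 * x ^ 2)
            * (C0 * (x ^ i * Real.exp (A * x + Bq * x ^ 2))) := by
          exact mul_le_mul hφ hFb hF0 (by positivity)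
      _ = bound x := by rw [hbound]; dsimp only; ring
  have cphi : ∀ c1 c2 : ℝ, Continuous fun x : ℝ =>
      Real.exp (α₁ / α * x * c1 + α₂ / (2 * α) * x ^ 2 * c2) := fun c1 c2 =>
    Real.continuous_exp.comp ((((continuous_const.mul continuous_id).mul continuous_const).add
      ((continuous_const.mul (continuous_pow 2)).mul continuous_const)))
  have cF : ∀ u : ℝ, Continuous (F u) := fun u => by
    rw [hF]
    exact ((continuous_pow i).mul continuous_const).mul (cphi _ _)
  have hF_meas : ∀ u : ℝ, AEStronglyMeasurable (F u) (volume.restrict (Set.Ioi (0:ℝ))) :=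
    fun u => (cF u).aestronglyMeasurable
  have hF'_meas : AEStronglyMeasurable (F' t₀) (volume.restrict (Set.Ioi (0:ℝ))) := by
    rw [hF']
    exact (((continuous_const.add ((continuous_const.mul continuous_id).mul
      continuous_const)).add ((continuous_const.mul (continuous_pow 2)).mul
      continuous_const)).mul (cF t₀)).aestronglyMeasurable
  have main := hasDerivAt_integral_of_dominated_loc_of_deriv_le (Metric.ball_mem_nhds t₀ one_pos)
    (Filter.Eventually.of_forall hF_meas) (hFk_int i t₀) hF'_meas h_bound bound_int
    (Filter.Eventually.of_forall fun x => fun u _ => h_diff x u)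
  obtain ⟨-, hd⟩ := main
  have hval : (∫ x in Set.Ioi (0:ℝ), F' t₀ x)
      = (i : ℝ) * α * skewSingleMoment α α₁ α₂ i t₀
        + α₁ * skewSingleMoment α α₁ α₂ (i + 1) t₀
        + α₂ * skewSingleMoment α α₁ α₂ (i + 2) t₀ := by
    have hp : (fun x : ℝ => F' t₀ x) = fun x : ℝ =>
        (i : ℝ) * α * (x ^ i * Real.exp ((i : ℝ) * α * t₀) *
          Real.exp (α₁ / α * x * Real.exp (α * t₀) + α₂ / (2 * α) * x ^ 2 * Real.exp (2 * α * t₀)))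
        + (α₁ * (x ^ (i+1) * Real.exp (((i+1 : ℕ) : ℝ) * α * t₀) *
          Real.exp (α₁ / α * x * Real.exp (α * t₀) + α₂ / (2 * α) * x ^ 2 * Real.exp (2 * α * t₀)))
        + α₂ * (x ^ (i+2) * Real.exp (((i+2 : ℕ) : ℝ) * α * t₀) *
          Real.exp (α₁ / α * x * Real.exp (α * t₀) + α₂ / (2 * α) * x ^ 2
            * Real.exp (2 * α * t₀)))) := by
      funext x
      have e1 : Real.exp (((i+1 : ℕ) : ℝ) * α * t₀)
          = Real.exp ((i : ℝ) * α * t₀) * Real.exp (α * t₀) := by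
        rw [← Real.exp_add]; congr 1; push_cast; ring
      have e2 : Real.exp (((i+2 : ℕ) : ℝ) * α * t₀)
          = Real.exp ((i : ℝ) * α * t₀) * Real.exp (2 * α * t₀) := by
        rw [← Real.exp_add]; congr 1; push_cast; ring
      rw [hF', hF]
      dsimp only
      rw [e1, e2]
      ring
    have I1 : IntegrableOn (fun x : ℝ => (i : ℝ) * α * (x ^ i * Real.exp ((i : ℝ) * α * t₀) *
        Real.exp (α₁ / α * x * Real.exp (α * t₀) + α₂ / (2 * α) * x ^ 2 * Real.exp (2 * α * t₀))))
        (Set.Ioi 0) := (hFk_int i t₀).const_mul _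
    have I2 : IntegrableOn (fun x : ℝ => α₁ * (x ^ (i+1) * Real.exp (((i+1 : ℕ) : ℝ) * α * t₀) *
        Real.exp (α₁ / α * x * Real.exp (α * t₀) + α₂ / (2 * α) * x ^ 2 * Real.exp (2 * α * t₀))))
        (Set.Ioi 0) := (hFk_int (i+1) t₀).const_mul _
    have I3 : IntegrableOn (fun x : ℝ => α₂ * (x ^ (i+2) * Real.exp (((i+2 : ℕ) : ℝ) * α * t₀) *
        Real.exp (α₁ / α * x * Real.exp (α * t₀) + α₂ / (2 * α) * x ^ 2 * Real.exp (2 * α * t₀))))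
        (Set.Ioi 0) := (hFk_int (i+2) t₀).const_mul _
    have I23 : IntegrableOn (fun x : ℝ =>
        α₁ * (x ^ (i+1) * Real.exp (((i+1 : ℕ) : ℝ) * α * t₀) *
          Real.exp (α₁ / α * x * Real.exp (α * t₀) + α₂ / (2 * α) * x ^ 2 * Real.exp (2 * α * t₀)))
        + α₂ * (x ^ (i+2) * Real.exp (((i+2 : ℕ) : ℝ) * α * t₀) *
          Real.exp (α₁ / α * x * Real.exp (α * t₀) + α₂ / (2 * α) * x ^ 2
            * Real.exp (2 * α * t₀)))) (Set.Ioi 0) := I2.add I3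
    rw [hp, integral_add I1 I23, integral_add I2 I3,
      integral_const_mul, integral_const_mul, integral_const_mul]
    rw [skewSingleMoment, skewSingleMoment, skewSingleMoment]
    ring
  rw [show (fun u => skewSingleMoment α α₁ α₂ i u)
    = fun u => ∫ x in Set.Ioi (0:ℝ), F u x from rfl]
  exact hval ▸ hd

set_option maxHeartbeats 2000000 in
lemma mu_deriv (α α₁ α₂ : ℝ) (hα : α ≠ 0) (hb : α₂/(2*α) < 0) (i j : ℕ) (t₀ : ℝ) :
    HasDerivAt (fun u => skewBimoment α α₁ α₂ i j u)
      (α * ((i : ℝ) + (j : ℝ)) * skewBimoment α α₁ α₂ i j t₀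
        + α₁ * (skewBimoment α α₁ α₂ (i + 1) j t₀ + skewBimoment α α₁ α₂ i (j + 1) t₀)
        + α₂ * (skewBimoment α α₁ α₂ (i + 2) j t₀ + skewBimoment α α₁ α₂ i (j + 2) t₀)) t₀ := by
  set S : Set (ℝ × ℝ) := (Set.Ioi (0:ℝ)) ×ˢ (Set.Ioi (0:ℝ)) with hS
  set F : ℝ → ℝ × ℝ → ℝ := fun u p =>
      p.1 ^ i * p.2 ^ j * Real.exp (((i : ℝ) + (j : ℝ)) * α * u)
        * ((p.2 - p.1) / (p.1 + p.2))
        * Real.exp (α₁ / α * (p.1 + p.2) * Real.exp (α * u)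
            + α₂ / (2 * α) * (p.1 ^ 2 + p.2 ^ 2) * Real.exp (2 * α * u)) with hF
  set F' : ℝ → ℝ × ℝ → ℝ := fun u p =>
      (((i : ℝ) + (j : ℝ)) * α + α₁ * (p.1 + p.2) * Real.exp (α * u)
        + α₂ * (p.1 ^ 2 + p.2 ^ 2) * Real.exp (2 * α * u)) * F u p with hF'
  set M : ℝ := Real.exp (|α| * (|t₀| + 1)) with hM
  set A : ℝ := |α₁ / α| * M with hA
  set Bq : ℝ := α₂ / (2 * α) * (M ^ 2)⁻¹ with hBq
  have hBq0 : Bq < 0 := mul_neg_of_neg_of_pos hb (by positivity)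
  set C0 : ℝ := Real.exp (((i : ℝ) + (j : ℝ)) * (|α| * (|t₀| + 1))) with hC0
  have ball_est : ∀ u ∈ Metric.ball t₀ 1,
      Real.exp (α * u) ≤ M ∧ Real.exp (2 * α * u) ≤ M ^ 2 ∧
      (M ^ 2)⁻¹ ≤ Real.exp (2 * α * u) ∧ Real.exp (((i : ℝ) + (j : ℝ)) * α * u) ≤ C0 := by
    intro u hu
    have hud : |u - t₀| < 1 := by
      rw [Metric.mem_ball, Real.dist_eq] at hu; exact hu
    have hu' : |u| ≤ |t₀| + 1 := by
      calc |u| = |(u - t₀) + t₀| := by ring_nf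
        _ ≤ |u - t₀| + |t₀| := abs_add_le _ _
        _ ≤ |t₀| + 1 := by linarith
    have h1 : α * u ≤ |α| * (|t₀| + 1) := by
      calc α * u ≤ |α * u| := le_abs_self _
        _ = |α| * |u| := abs_mul _ _
        _ ≤ |α| * (|t₀| + 1) := mul_le_mul_of_nonneg_left hu' (abs_nonneg _)
    have h1' : -(|α| * (|t₀| + 1)) ≤ α * u := by
      have : -(α * u) ≤ |α| * (|t₀| + 1) := by
        calc -(α * u) ≤ |α * u| := neg_le_abs _
          _ = |α| * |u| := abs_mul _ _
          _ ≤ |α| * (|t₀| + 1) := mul_le_mul_of_nonneg_left hu' (abs_nonneg _)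
      linarith
    refine ⟨Real.exp_le_exp.mpr h1, ?_, ?_, ?_⟩
    · rw [hM, show (Real.exp (|α| * (|t₀| + 1))) ^ 2
        = Real.exp ((2:ℕ) * (|α| * (|t₀| + 1))) from (Real.exp_nat_mul _ 2).symm]
      exact Real.exp_le_exp.mpr (by push_cast; linarith)
    · rw [hM, show (Real.exp (|α| * (|t₀| + 1))) ^ 2
        = Real.exp ((2:ℕ) * (|α| * (|t₀| + 1))) from (Real.exp_nat_mul _ 2).symm,
        ← Real.exp_neg]
      exact Real.exp_le_exp.mpr (by push_cast; linarith)
    · rw [hC0]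
      refine Real.exp_le_exp.mpr ?_
      rw [mul_assoc]
      exact mul_le_mul_of_nonneg_left h1 (by positivity)
  have h_diff : ∀ p : ℝ × ℝ, ∀ u : ℝ, HasDerivAt (fun u => F u p) (F' u p) u := by
    intro p u
    have hG : HasDerivAt (fun u => α₁ / α * (p.1 + p.2) * Real.exp (α * u)
        + α₂ / (2 * α) * (p.1 ^ 2 + p.2 ^ 2) * Real.exp (2 * α * u))
        (α₁ * (p.1 + p.2) * Real.exp (α * u)
          + α₂ * (p.1 ^ 2 + p.2 ^ 2) * Real.exp (2 * α * u)) u := by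
      have d1 : HasDerivAt (fun u : ℝ => α * u) α u := by
        simpa using (hasDerivAt_id u).const_mul α
      have d2 : HasDerivAt (fun u : ℝ => 2 * α * u) (2 * α) u := by
        simpa using (hasDerivAt_id u).const_mul (2 * α)
      exact ((d1.exp.const_mul (α₁ / α * (p.1 + p.2))).add
        (d2.exp.const_mul (α₂ / (2 * α) * (p.1 ^ 2 + p.2 ^ 2)))).congr_deriv
        (by field_simp)
    have d3 : HasDerivAt (fun u : ℝ => ((i : ℝ) + (j : ℝ)) * α * u) (((i : ℝ) + (j : ℝ)) * α) u := by
      simpa using (hasDerivAt_id u).const_mul (((i : ℝ) + (j : ℝ)) * α)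
    have main := ((d3.exp.const_mul (p.1 ^ i * p.2 ^ j)).mul_const
      ((p.2 - p.1) / (p.1 + p.2))).mul hG.exp
    rw [hF', hF]
    refine main.congr_deriv ?_
    dsimp only
    ring
  have hFk_int : ∀ (k l : ℕ) (t : ℝ), IntegrableOn (fun p : ℝ × ℝ =>
      p.1 ^ k * p.2 ^ l * Real.exp (((k : ℝ) + (l : ℝ)) * α * t)
        * ((p.2 - p.1) / (p.1 + p.2))
        * Real.exp (α₁ / α * (p.1 + p.2) * Real.exp (α * t)
            + α₂ / (2 * α) * (p.1 ^ 2 + p.2 ^ 2) * Real.exp (2 * α * t))) S :=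
    fun k l t => mu_int α₁ hb k l t
  set bound : ℝ × ℝ → ℝ := fun p =>
      (((i : ℝ) + (j : ℝ)) * |α| + |α₁| * M * (p.1 + p.2) + |α₂| * M ^ 2 * (p.1 ^ 2 + p.2 ^ 2))
        * (C0 * ((p.1 ^ i * Real.exp (A * p.1 + Bq * p.1 ^ 2))
            * (p.2 ^ j * Real.exp (A * p.2 + Bq * p.2 ^ 2)))) with hbound
  have bound_int : IntegrableOn bound S := by
    have hexpand : bound = fun p : ℝ × ℝ =>
        (C0 * (((i : ℝ) + (j : ℝ)) * |α|)) *
          ((p.1 ^ i * Real.exp (A * p.1 + Bq * p.1 ^ 2))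
            * (p.2 ^ j * Real.exp (A * p.2 + Bq * p.2 ^ 2)))
        + (C0 * (|α₁| * M)) *
          ((p.1 ^ (i+1) * Real.exp (A * p.1 + Bq * p.1 ^ 2))
            * (p.2 ^ j * Real.exp (A * p.2 + Bq * p.2 ^ 2)))
        + (C0 * (|α₁| * M)) *
          ((p.1 ^ i * Real.exp (A * p.1 + Bq * p.1 ^ 2))
            * (p.2 ^ (j+1) * Real.exp (A * p.2 + Bq * p.2 ^ 2)))
        + (C0 * (|α₂| * M ^ 2)) *
          ((p.1 ^ (i+2) * Real.exp (A * p.1 + Bq * p.1 ^ 2))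
            * (p.2 ^ j * Real.exp (A * p.2 + Bq * p.2 ^ 2)))
        + (C0 * (|α₂| * M ^ 2)) *
          ((p.1 ^ i * Real.exp (A * p.1 + Bq * p.1 ^ 2))
            * (p.2 ^ (j+2) * Real.exp (A * p.2 + Bq * p.2 ^ 2))) := by
      funext p
      rw [hbound]
      dsimp only
      ring
    rw [hexpand, hS]
    exact (((((prod_int (gauss_int hBq0 i A) (gauss_int hBq0 j A)).const_mul _).add
      ((prod_int (gauss_int hBq0 (i+1) A) (gauss_int hBq0 j A)).const_mul _)).add
      ((prod_int (gauss_int hBq0 i A) (gauss_int hBq0 (j+1) A)).const_mul _)).add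
      ((prod_int (gauss_int hBq0 (i+2) A) (gauss_int hBq0 j A)).const_mul _)).add
      ((prod_int (gauss_int hBq0 i A) (gauss_int hBq0 (j+2) A)).const_mul _)
  have h_bound : ∀ᵐ p ∂(volume.restrict S), ∀ u ∈ Metric.ball t₀ 1, ‖F' u p‖ ≤ bound p := by
    have hSm : MeasurableSet S := (measurableSet_Ioi).prod (measurableSet_Ioi)
    filter_upwards [ae_restrict_mem hSm] with p hp
    intro u hu
    obtain ⟨hx, hy⟩ := hp
    simp only [Set.mem_Ioi] at hx hy
    obtain ⟨e1, e2, e3, e4⟩ := ball_est u hu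
    have hsum : (0:ℝ) < p.1 + p.2 := by linarith
    have hsq : (0:ℝ) < p.1 ^ 2 + p.2 ^ 2 := by positivity
    have hr : |(p.2 - p.1) / (p.1 + p.2)| ≤ 1 := by
      rw [abs_div, abs_of_pos hsum]
      exact div_le_one_of_le₀ (abs_le.mpr ⟨by linarith, by linarith⟩) hsum.le
    have hφ : |((i : ℝ) + (j : ℝ)) * α + α₁ * (p.1 + p.2) * Real.exp (α * u)
        + α₂ * (p.1 ^ 2 + p.2 ^ 2) * Real.exp (2 * α * u)|
        ≤ ((i : ℝ) + (j : ℝ)) * |α| + |α₁| * M * (p.1 + p.2)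
          + |α₂| * M ^ 2 * (p.1 ^ 2 + p.2 ^ 2) := by
      have t1 : |((i:ℝ) + (j:ℝ)) * α| = ((i:ℝ) + (j:ℝ)) * |α| := by
        rw [abs_mul, abs_of_nonneg (by positivity : (0:ℝ) ≤ (i:ℝ) + (j:ℝ))]
      have t2 : |α₁ * (p.1 + p.2) * Real.exp (α * u)| ≤ |α₁| * M * (p.1 + p.2) := by
        rw [abs_mul, abs_mul, abs_of_pos hsum, abs_of_pos (Real.exp_pos _)]
        nlinarith [mul_nonneg (mul_nonneg (abs_nonneg α₁) hsum.le) (sub_nonneg.mpr e1)]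
      have t3 : |α₂ * (p.1 ^ 2 + p.2 ^ 2) * Real.exp (2 * α * u)|
          ≤ |α₂| * M ^ 2 * (p.1 ^ 2 + p.2 ^ 2) := by
        rw [abs_mul, abs_mul, abs_of_pos hsq, abs_of_pos (Real.exp_pos _)]
        nlinarith [mul_nonneg (mul_nonneg (abs_nonneg α₂) hsq.le) (sub_nonneg.mpr e2)]
      calc |((i : ℝ) + (j : ℝ)) * α + α₁ * (p.1 + p.2) * Real.exp (α * u)
          + α₂ * (p.1 ^ 2 + p.2 ^ 2) * Real.exp (2 * α * u)|
          ≤ |((i:ℝ) + (j:ℝ)) * α| + |α₁ * (p.1 + p.2) * Real.exp (α * u)|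
            + |α₂ * (p.1 ^ 2 + p.2 ^ 2) * Real.exp (2 * α * u)| := abs_add_three _ _ _
        _ ≤ ((i : ℝ) + (j : ℝ)) * |α| + |α₁| * M * (p.1 + p.2)
            + |α₂| * M ^ 2 * (p.1 ^ 2 + p.2 ^ 2) := by rw [t1]; gcongr
    have hexp : Real.exp (α₁ / α * (p.1 + p.2) * Real.exp (α * u)
        + α₂ / (2 * α) * (p.1 ^ 2 + p.2 ^ 2) * Real.exp (2 * α * u))
        ≤ Real.exp (A * p.1 + Bq * p.1 ^ 2) * Real.exp (A * p.2 + Bq * p.2 ^ 2) := by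
      rw [← Real.exp_add]
      refine Real.exp_le_exp.mpr ?_
      have s1 : α₁ / α * (p.1 + p.2) * Real.exp (α * u) ≤ A * (p.1 + p.2) := by
        rw [hA]
        nlinarith [mul_nonneg (mul_nonneg (sub_nonneg.mpr (le_abs_self (α₁/α))) hsum.le)
            (Real.exp_pos (α * u)).le,
          mul_nonneg (mul_nonneg (abs_nonneg (α₁/α)) hsum.le) (sub_nonneg.mpr e1)]
      have s2 : α₂ / (2 * α) * (p.1 ^ 2 + p.2 ^ 2) * Real.exp (2 * α * u)
          ≤ Bq * (p.1 ^ 2 + p.2 ^ 2) := by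
        rw [hBq]
        nlinarith [mul_nonneg (mul_nonneg (neg_nonneg.mpr hb.le) hsq.le) (sub_nonneg.mpr e3)]
      linarith
    have hFb : |F u p| ≤ C0 * ((p.1 ^ i * Real.exp (A * p.1 + Bq * p.1 ^ 2))
        * (p.2 ^ j * Real.exp (A * p.2 + Bq * p.2 ^ 2))) := by
      rw [hF]
      dsimp only
      rw [show p.1 ^ i * p.2 ^ j * Real.exp (((i : ℝ) + (j : ℝ)) * α * u)
            * ((p.2 - p.1) / (p.1 + p.2))
            * Real.exp (α₁ / α * (p.1 + p.2) * Real.exp (α * u)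
                + α₂ / (2 * α) * (p.1 ^ 2 + p.2 ^ 2) * Real.exp (2 * α * u))
          = (p.1 ^ i * p.2 ^ j * Real.exp (((i : ℝ) + (j : ℝ)) * α * u)
              * Real.exp (α₁ / α * (p.1 + p.2) * Real.exp (α * u)
                + α₂ / (2 * α) * (p.1 ^ 2 + p.2 ^ 2) * Real.exp (2 * α * u)))
            * ((p.2 - p.1) / (p.1 + p.2)) from by ring, abs_mul]
      calc |p.1 ^ i * p.2 ^ j * Real.exp (((i : ℝ) + (j : ℝ)) * α * u)
              * Real.exp (α₁ / α * (p.1 + p.2) * Real.exp (α * u)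
                + α₂ / (2 * α) * (p.1 ^ 2 + p.2 ^ 2) * Real.exp (2 * α * u))|
            * |(p.2 - p.1) / (p.1 + p.2)|
          ≤ (p.1 ^ i * p.2 ^ j * Real.exp (((i : ℝ) + (j : ℝ)) * α * u)
              * Real.exp (α₁ / α * (p.1 + p.2) * Real.exp (α * u)
                + α₂ / (2 * α) * (p.1 ^ 2 + p.2 ^ 2) * Real.exp (2 * α * u))) * 1 := by
            rw [abs_of_nonneg (by positivity)]
            exact mul_le_mul_of_nonneg_left hr (by positivity)
        _ ≤ C0 * ((p.1 ^ i * Real.exp (A * p.1 + Bq * p.1 ^ 2))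
            * (p.2 ^ j * Real.exp (A * p.2 + Bq * p.2 ^ 2))) := by
            rw [mul_one]
            calc p.1 ^ i * p.2 ^ j * Real.exp (((i : ℝ) + (j : ℝ)) * α * u)
                * Real.exp (α₁ / α * (p.1 + p.2) * Real.exp (α * u)
                  + α₂ / (2 * α) * (p.1 ^ 2 + p.2 ^ 2) * Real.exp (2 * α * u))
                ≤ p.1 ^ i * p.2 ^ j * C0
                  * (Real.exp (A * p.1 + Bq * p.1 ^ 2) * Real.exp (A * p.2 + Bq * p.2 ^ 2)) := by
                  exact mul_le_mul (mul_le_mul_of_nonneg_left e4 (by positivity)) hexp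
                    (Real.exp_pos _).le (by positivity)
              _ = C0 * ((p.1 ^ i * Real.exp (A * p.1 + Bq * p.1 ^ 2))
                  * (p.2 ^ j * Real.exp (A * p.2 + Bq * p.2 ^ 2))) := by ring
    rw [hF', Real.norm_eq_abs, abs_mul]
    calc |((i : ℝ) + (j : ℝ)) * α + α₁ * (p.1 + p.2) * Real.exp (α * u)
          + α₂ * (p.1 ^ 2 + p.2 ^ 2) * Real.exp (2 * α * u)| * |F u p|
        ≤ (((i : ℝ) + (j : ℝ)) * |α| + |α₁| * M * (p.1 + p.2)
            + |α₂| * M ^ 2 * (p.1 ^ 2 + p.2 ^ 2))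
          * (C0 * ((p.1 ^ i * Real.exp (A * p.1 + Bq * p.1 ^ 2))
            * (p.2 ^ j * Real.exp (A * p.2 + Bq * p.2 ^ 2)))) :=
          mul_le_mul hφ hFb (abs_nonneg _) (by positivity)
      _ = bound p := by rw [hbound]
  have mexp : ∀ c1 c2 : ℝ, Measurable fun p : ℝ × ℝ =>
      Real.exp (α₁ / α * (p.1 + p.2) * c1 + α₂ / (2 * α) * (p.1 ^ 2 + p.2 ^ 2) * c2) :=
    fun c1 c2 => ((((measurable_fst.add measurable_snd).const_mul (α₁/α)).mul_const c1).add
      ((((measurable_fst.pow_const 2).add (measurable_snd.pow_const 2)).const_mul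
        (α₂/(2*α))).mul_const c2)).exp
  have mF : ∀ u : ℝ, Measurable (F u) := by
    intro u
    rw [hF]
    exact ((((measurable_fst.pow_const i).mul (measurable_snd.pow_const j)).mul_const
      (Real.exp (((i:ℝ)+(j:ℝ))*α*u))).mul
      ((measurable_snd.sub measurable_fst).div (measurable_fst.add measurable_snd))).mul
      (mexp _ _)
  have hF_meas : ∀ u : ℝ, AEStronglyMeasurable (F u) (volume.restrict S) :=
    fun u => (mF u).aestronglyMeasurable
  have hF'_meas : AEStronglyMeasurable (F' t₀) (volume.restrict S) := by
    rw [hF']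
    exact ((((measurable_const.add (((measurable_fst.add measurable_snd).const_mul α₁).mul_const
      (Real.exp (α*t₀)))).add ((((measurable_fst.pow_const 2).add
      (measurable_snd.pow_const 2)).const_mul α₂).mul_const (Real.exp (2*α*t₀))))).mul
      (mF t₀)).aestronglyMeasurable
  have main := hasDerivAt_integral_of_dominated_loc_of_deriv_le (Metric.ball_mem_nhds t₀ one_pos)
    (Filter.Eventually.of_forall hF_meas) (hFk_int i j t₀) hF'_meas h_bound bound_int
    (Filter.Eventually.of_forall fun p => fun u _ => h_diff p u)
  obtain ⟨-, hd⟩ := main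
  have hval : (∫ p in S, F' t₀ p)
      = α * ((i : ℝ) + (j : ℝ)) * skewBimoment α α₁ α₂ i j t₀
        + α₁ * (skewBimoment α α₁ α₂ (i + 1) j t₀ + skewBimoment α α₁ α₂ i (j + 1) t₀)
        + α₂ * (skewBimoment α α₁ α₂ (i + 2) j t₀ + skewBimoment α α₁ α₂ i (j + 2) t₀) := by
    have e1 : Real.exp ((((i+1 : ℕ) : ℝ) + (j : ℝ)) * α * t₀)
        = Real.exp (((i : ℝ) + (j : ℝ)) * α * t₀) * Real.exp (α * t₀) := by
      rw [← Real.exp_add]; congr 1; push_cast; ring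
    have e2 : Real.exp (((i : ℝ) + ((j+1 : ℕ) : ℝ)) * α * t₀)
        = Real.exp (((i : ℝ) + (j : ℝ)) * α * t₀) * Real.exp (α * t₀) := by
      rw [← Real.exp_add]; congr 1; push_cast; ring
    have e3 : Real.exp ((((i+2 : ℕ) : ℝ) + (j : ℝ)) * α * t₀)
        = Real.exp (((i : ℝ) + (j : ℝ)) * α * t₀) * Real.exp (2 * α * t₀) := by
      rw [← Real.exp_add]; congr 1; push_cast; ring
    have e4 : Real.exp (((i : ℝ) + ((j+2 : ℕ) : ℝ)) * α * t₀)
        = Real.exp (((i : ℝ) + (j : ℝ)) * α * t₀) * Real.exp (2 * α * t₀) := by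
      rw [← Real.exp_add]; congr 1; push_cast; ring
    have hp : (fun p : ℝ × ℝ => F' t₀ p) = fun p : ℝ × ℝ =>
        α * ((i : ℝ) + (j : ℝ)) * (p.1 ^ i * p.2 ^ j * Real.exp (((i : ℝ) + (j : ℝ)) * α * t₀)
          * ((p.2 - p.1) / (p.1 + p.2))
          * Real.exp (α₁ / α * (p.1 + p.2) * Real.exp (α * t₀)
              + α₂ / (2 * α) * (p.1 ^ 2 + p.2 ^ 2) * Real.exp (2 * α * t₀)))
        + (α₁ * (p.1 ^ (i+1) * p.2 ^ j * Real.exp ((((i+1 : ℕ) : ℝ) + (j : ℝ)) * α * t₀)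
            * ((p.2 - p.1) / (p.1 + p.2))
            * Real.exp (α₁ / α * (p.1 + p.2) * Real.exp (α * t₀)
                + α₂ / (2 * α) * (p.1 ^ 2 + p.2 ^ 2) * Real.exp (2 * α * t₀))
          + p.1 ^ i * p.2 ^ (j+1) * Real.exp (((i : ℝ) + ((j+1 : ℕ) : ℝ)) * α * t₀)
            * ((p.2 - p.1) / (p.1 + p.2))
            * Real.exp (α₁ / α * (p.1 + p.2) * Real.exp (α * t₀)
                + α₂ / (2 * α) * (p.1 ^ 2 + p.2 ^ 2) * Real.exp (2 * α * t₀)))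
        + α₂ * (p.1 ^ (i+2) * p.2 ^ j * Real.exp ((((i+2 : ℕ) : ℝ) + (j : ℝ)) * α * t₀)
            * ((p.2 - p.1) / (p.1 + p.2))
            * Real.exp (α₁ / α * (p.1 + p.2) * Real.exp (α * t₀)
                + α₂ / (2 * α) * (p.1 ^ 2 + p.2 ^ 2) * Real.exp (2 * α * t₀))
          + p.1 ^ i * p.2 ^ (j+2) * Real.exp (((i : ℝ) + ((j+2 : ℕ) : ℝ)) * α * t₀)
            * ((p.2 - p.1) / (p.1 + p.2))
            * Real.exp (α₁ / α * (p.1 + p.2) * Real.exp (α * t₀)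
                + α₂ / (2 * α) * (p.1 ^ 2 + p.2 ^ 2) * Real.exp (2 * α * t₀)))) := by
      funext p
      rw [hF', hF]
      dsimp only
      rw [e1, e2, e3, e4]
      ring
    have K1 := hFk_int (i+1) j t₀
    have K2 := hFk_int i (j+1) t₀
    have K3 := hFk_int (i+2) j t₀
    have K4 := hFk_int i (j+2) t₀
    have Ja : IntegrableOn (fun p : ℝ × ℝ =>
        α * ((i : ℝ) + (j : ℝ)) * (p.1 ^ i * p.2 ^ j * Real.exp (((i : ℝ) + (j : ℝ)) * α * t₀)
          * ((p.2 - p.1) / (p.1 + p.2))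
          * Real.exp (α₁ / α * (p.1 + p.2) * Real.exp (α * t₀)
              + α₂ / (2 * α) * (p.1 ^ 2 + p.2 ^ 2) * Real.exp (2 * α * t₀)))) S :=
      (hFk_int i j t₀).const_mul _
    have K12 : IntegrableOn (fun p : ℝ × ℝ =>
        p.1 ^ (i+1) * p.2 ^ j * Real.exp ((((i+1 : ℕ) : ℝ) + (j : ℝ)) * α * t₀)
            * ((p.2 - p.1) / (p.1 + p.2))
            * Real.exp (α₁ / α * (p.1 + p.2) * Real.exp (α * t₀)
                + α₂ / (2 * α) * (p.1 ^ 2 + p.2 ^ 2) * Real.exp (2 * α * t₀))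
          + p.1 ^ i * p.2 ^ (j+1) * Real.exp (((i : ℝ) + ((j+1 : ℕ) : ℝ)) * α * t₀)
            * ((p.2 - p.1) / (p.1 + p.2))
            * Real.exp (α₁ / α * (p.1 + p.2) * Real.exp (α * t₀)
                + α₂ / (2 * α) * (p.1 ^ 2 + p.2 ^ 2) * Real.exp (2 * α * t₀))) S := K1.add K2
    have K34 : IntegrableOn (fun p : ℝ × ℝ =>
        p.1 ^ (i+2) * p.2 ^ j * Real.exp ((((i+2 : ℕ) : ℝ) + (j : ℝ)) * α * t₀)
            * ((p.2 - p.1) / (p.1 + p.2))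
            * Real.exp (α₁ / α * (p.1 + p.2) * Real.exp (α * t₀)
                + α₂ / (2 * α) * (p.1 ^ 2 + p.2 ^ 2) * Real.exp (2 * α * t₀))
          + p.1 ^ i * p.2 ^ (j+2) * Real.exp (((i : ℝ) + ((j+2 : ℕ) : ℝ)) * α * t₀)
            * ((p.2 - p.1) / (p.1 + p.2))
            * Real.exp (α₁ / α * (p.1 + p.2) * Real.exp (α * t₀)
                + α₂ / (2 * α) * (p.1 ^ 2 + p.2 ^ 2) * Real.exp (2 * α * t₀))) S := K3.add K4
    have Jb : IntegrableOn (fun p : ℝ × ℝ => α₁ * (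
        p.1 ^ (i+1) * p.2 ^ j * Real.exp ((((i+1 : ℕ) : ℝ) + (j : ℝ)) * α * t₀)
            * ((p.2 - p.1) / (p.1 + p.2))
            * Real.exp (α₁ / α * (p.1 + p.2) * Real.exp (α * t₀)
                + α₂ / (2 * α) * (p.1 ^ 2 + p.2 ^ 2) * Real.exp (2 * α * t₀))
          + p.1 ^ i * p.2 ^ (j+1) * Real.exp (((i : ℝ) + ((j+1 : ℕ) : ℝ)) * α * t₀)
            * ((p.2 - p.1) / (p.1 + p.2))
            * Real.exp (α₁ / α * (p.1 + p.2) * Real.exp (α * t₀)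
                + α₂ / (2 * α) * (p.1 ^ 2 + p.2 ^ 2) * Real.exp (2 * α * t₀)))) S :=
      K12.const_mul _
    have Jc : IntegrableOn (fun p : ℝ × ℝ => α₂ * (
        p.1 ^ (i+2) * p.2 ^ j * Real.exp ((((i+2 : ℕ) : ℝ) + (j : ℝ)) * α * t₀)
            * ((p.2 - p.1) / (p.1 + p.2))
            * Real.exp (α₁ / α * (p.1 + p.2) * Real.exp (α * t₀)
                + α₂ / (2 * α) * (p.1 ^ 2 + p.2 ^ 2) * Real.exp (2 * α * t₀))
          + p.1 ^ i * p.2 ^ (j+2) * Real.exp (((i : ℝ) + ((j+2 : ℕ) : ℝ)) * α * t₀)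
            * ((p.2 - p.1) / (p.1 + p.2))
            * Real.exp (α₁ / α * (p.1 + p.2) * Real.exp (α * t₀)
                + α₂ / (2 * α) * (p.1 ^ 2 + p.2 ^ 2) * Real.exp (2 * α * t₀)))) S :=
      K34.const_mul _
    have Jbc : IntegrableOn (fun p : ℝ × ℝ =>
        α₁ * (p.1 ^ (i+1) * p.2 ^ j * Real.exp ((((i+1 : ℕ) : ℝ) + (j : ℝ)) * α * t₀)
            * ((p.2 - p.1) / (p.1 + p.2))
            * Real.exp (α₁ / α * (p.1 + p.2) * Real.exp (α * t₀)
                + α₂ / (2 * α) * (p.1 ^ 2 + p.2 ^ 2) * Real.exp (2 * α * t₀))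
          + p.1 ^ i * p.2 ^ (j+1) * Real.exp (((i : ℝ) + ((j+1 : ℕ) : ℝ)) * α * t₀)
            * ((p.2 - p.1) / (p.1 + p.2))
            * Real.exp (α₁ / α * (p.1 + p.2) * Real.exp (α * t₀)
                + α₂ / (2 * α) * (p.1 ^ 2 + p.2 ^ 2) * Real.exp (2 * α * t₀)))
        + α₂ * (p.1 ^ (i+2) * p.2 ^ j * Real.exp ((((i+2 : ℕ) : ℝ) + (j : ℝ)) * α * t₀)
            * ((p.2 - p.1) / (p.1 + p.2))
            * Real.exp (α₁ / α * (p.1 + p.2) * Real.exp (α * t₀)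
                + α₂ / (2 * α) * (p.1 ^ 2 + p.2 ^ 2) * Real.exp (2 * α * t₀))
          + p.1 ^ i * p.2 ^ (j+2) * Real.exp (((i : ℝ) + ((j+2 : ℕ) : ℝ)) * α * t₀)
            * ((p.2 - p.1) / (p.1 + p.2))
            * Real.exp (α₁ / α * (p.1 + p.2) * Real.exp (α * t₀)
                + α₂ / (2 * α) * (p.1 ^ 2 + p.2 ^ 2) * Real.exp (2 * α * t₀)))) S := Jb.add Jc
    rw [hp, integral_add Ja Jbc, integral_add Jb Jc,
      integral_const_mul, integral_const_mul, integral_const_mul,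
      integral_add K1 K2, integral_add K3 K4]
    rw [skewBimoment, skewBimoment, skewBimoment, skewBimoment, skewBimoment, hS]
    ring
  rw [show (fun u => skewBimoment α α₁ α₂ i j u) = fun u => ∫ p in S, F u p from rfl]
  exact hval ▸ hd

/-- The deformed skew-symmetric (bi)moments converge, are differentiable, and simultaneously
satisfy the nonisospectral evolutions and the stationarity relations. -/
theorem skewMoments_evolution (α α₁ α₂ : ℝ) (hα : α ≠ 0) (hαα₂ : α * α₂ < 0) :
    (∀ (i j : ℕ) (t : ℝ), IntegrableOn
      (fun p : ℝ × ℝ =>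
        p.1 ^ i * p.2 ^ j * Real.exp (((i : ℝ) + (j : ℝ)) * α * t)
          * ((p.2 - p.1) / (p.1 + p.2))
          * Real.exp (α₁ / α * (p.1 + p.2) * Real.exp (α * t)
              + α₂ / (2 * α) * (p.1 ^ 2 + p.2 ^ 2) * Real.exp (2 * α * t)))
      ((Set.Ioi (0 : ℝ)) ×ˢ (Set.Ioi (0 : ℝ)))) ∧
    (∀ (i : ℕ) (t : ℝ), IntegrableOn
      (fun x : ℝ => x ^ i * Real.exp ((i : ℝ) * α * t) *
        Real.exp (α₁ / α * x * Real.exp (α * t)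
          + α₂ / (2 * α) * x ^ 2 * Real.exp (2 * α * t)))
      (Set.Ioi (0 : ℝ))) ∧
    (∀ (i j : ℕ) (t : ℝ), HasDerivAt (fun u => skewBimoment α α₁ α₂ i j u)
      (α * ((i : ℝ) + (j : ℝ)) * skewBimoment α α₁ α₂ i j t
        + α₁ * (skewBimoment α α₁ α₂ (i + 1) j t + skewBimoment α α₁ α₂ i (j + 1) t)
        + α₂ * (skewBimoment α α₁ α₂ (i + 2) j t + skewBimoment α α₁ α₂ i (j + 2) t)) t) ∧
    (∀ (i : ℕ) (t : ℝ), HasDerivAt (fun u => skewSingleMoment α α₁ α₂ i u)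
      ((i : ℝ) * α * skewSingleMoment α α₁ α₂ i t
        + α₁ * skewSingleMoment α α₁ α₂ (i + 1) t
        + α₂ * skewSingleMoment α α₁ α₂ (i + 2) t) t) ∧
    (∀ (i j : ℕ) (t : ℝ), HasDerivAt (fun u => skewBimoment α α₁ α₂ i j u)
      (-2 * α * skewBimoment α α₁ α₂ i j t) t) ∧
    (∀ (i : ℕ) (t : ℝ), HasDerivAt (fun u => skewSingleMoment α α₁ α₂ i u)
      (-α * skewSingleMoment α α₁ α₂ i t) t) := by
  have hb : α₂ / (2 * α) < 0 := by
    have h := div_neg_of_neg_of_pos hαα₂ (show (0:ℝ) < 2 * α ^ 2 by positivity)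
    rwa [show (2:ℝ) * α ^ 2 = α * (2 * α) from by ring, mul_div_mul_left _ _ hα] at h
  refine ⟨fun i j t => mu_int α₁ hb i j t, fun i t => beta_int α₁ hb i t,
    fun i j t => mu_deriv α α₁ α₂ hα hb i j t, fun i t => beta_deriv α α₁ α₂ hα hb i t, ?_, ?_⟩
  · intro i j t
    have hfeq : (fun u => skewBimoment α α₁ α₂ i j u)
        = fun u => Real.exp (-(2 * α * u)) * skewBimoment α α₁ α₂ i j 0 :=
      funext fun u => mu_scale α₁ hb i j u
    rw [hfeq]
    have h1 : HasDerivAt (fun u : ℝ => -(2 * α * u)) (-(2 * α)) t := by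
      simpa using (hasDerivAt_id t).const_mul (-(2 * α))
    have h2 := h1.exp.mul_const (skewBimoment α α₁ α₂ i j 0)
    refine h2.congr_deriv ?_
    rw [mu_scale α₁ hb i j t]
    ring
  · intro i t
    have hfeq : (fun u => skewSingleMoment α α₁ α₂ i u)
        = fun u => Real.exp (-(α * u)) * skewSingleMoment α α₁ α₂ i 0 :=
      funext fun u => beta_scale α α₁ α₂ i u
    rw [hfeq]
    have h1 : HasDerivAt (fun u : ℝ => -(α * u)) (-α) t := by
      simpa using (hasDerivAt_id t).const_mul (-α)
    have h2 := h1.exp.mul_const (skewSingleMoment α α₁ α₂ i 0)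
    refine h2.congr_deriv ?_
    rw [beta_scale α α₁ α₂ i t]
    ring
end

section
/- Let α, α₁, α₂ ∈ ℝ and let (u_n)_{n≥0}, (b_n)_{n≥0} be real sequences satisfying, for all n ≥ 2, the stationary nonisospectral B-Toda system: α + α₁(b_{n+1} − 2b_n + b_{n−1}) + α₂[b_{n+1}² − b_{n−1}² − 2b_n(b_{n+1} − b_{n−1}) + u_{n−1}(2u_n − b_n + b_{n−2}) − u_{n+1}(2u_n − b_{n+2} + b_n)] = 0 and α b_n + α₁ u_n(b_{n+1} − b_{n−1}) + α₂ u_n[(b_{n+1} − b_{n−1})² + u_{n+1}(b_{n+2} − b_n) + u_{n−1}(b_n − b_{n−2})] = 0. Then there exists a real constant A₀ such that for all n ≥ 2: (n−2)α + α₁(b_n − b_{n−1}) + α₂[(b_n − b_{n−1})² − 2u_{n−1}u_n + u_{n−1}(b_n − b_{n−2}) + u_n(b_{n+1} − b_{n−1})] − A₀ = 0, and α(b_n − (2n−3)u_n) + 2α₂ u_n[(b_n − b_{n−1})(b_{n+1} − b_n) + u_n(u_{n−1} + u_{n+1} − b_{n+1} + b_{n−1})] + 2A₀ u_n = 0. 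-/
/-- The discrete Painlevé-type system associated with the Toda hierarchy of BKP type,
obtained as the first integrals of the stationary (reduction of the) nonisospectral
B-Toda lattice. Here `u`, `b` are the variables of the four-term recurrence of
partial-skew orthogonal polynomials. -/
theorem stationary_BToda_dP
    (α α₁ α₂ : ℝ) (u b : ℕ → ℝ)
    (h1 : ∀ n : ℕ, 2 ≤ n →
      α + α₁ * (b (n + 1) - 2 * b n + b (n - 1))
        + α₂ * ((b (n + 1)) ^ 2 - (b (n - 1)) ^ 2
            - 2 * b n * (b (n + 1) - b (n - 1))
            + u (n - 1) * (2 * u n - b n + b (n - 2))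
            - u (n + 1) * (2 * u n - b (n + 2) + b n)) = 0)
    (h2 : ∀ n : ℕ, 2 ≤ n →
      α * b n + α₁ * u n * (b (n + 1) - b (n - 1))
        + α₂ * u n * ((b (n + 1) - b (n - 1)) ^ 2
            + u (n + 1) * (b (n + 2) - b n)
            + u (n - 1) * (b n - b (n - 2))) = 0) :
    ∃ A₀ : ℝ, ∀ n : ℕ, 2 ≤ n →
      (((n : ℝ) - 2) * α + α₁ * (b n - b (n - 1))
        + α₂ * ((b n - b (n - 1)) ^ 2 - 2 * u (n - 1) * u n
            + u (n - 1) * (b n - b (n - 2))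
            + u n * (b (n + 1) - b (n - 1))) - A₀ = 0) ∧
      (α * (b n - (2 * (n : ℝ) - 3) * u n)
        + 2 * α₂ * u n * ((b n - b (n - 1)) * (b (n + 1) - b n)
            + u n * (u (n - 1) + u (n + 1) - b (n + 1) + b (n - 1)))
        + 2 * A₀ * u n = 0) := by
  set A₀ : ℝ := α₁ * (b 2 - b 1)
      + α₂ * ((b 2 - b 1) ^ 2 - 2 * u 1 * u 2 + u 1 * (b 2 - b 0)
          + u 2 * (b 3 - b 1)) with hA
  -- the conserved quantity
  have key : ∀ n : ℕ, 2 ≤ n →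
      ((n : ℝ) - 2) * α + α₁ * (b n - b (n - 1))
        + α₂ * ((b n - b (n - 1)) ^ 2 - 2 * u (n - 1) * u n
            + u (n - 1) * (b n - b (n - 2))
            + u n * (b (n + 1) - b (n - 1))) = A₀ := by
    intro n hn
    induction n, hn using Nat.le_induction with
    | base => norm_num [hA]
    | succ n hn ih =>
      obtain ⟨m, rfl⟩ : ∃ m, n = m + 2 := ⟨n - 2, by omega⟩
      have e1 := h1 (m + 2) (by omega)
      simp only [show m + 2 - 1 = m + 1 by omega, show m + 2 - 2 = m by omega,
        show m + 2 + 1 = m + 3 by omega, show m + 2 + 2 = m + 4 by omega,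
        show m + 2 + 1 - 1 = m + 2 by omega, show m + 2 + 1 - 2 = m + 1 by omega,
        show m + 3 - 1 = m + 2 by omega, show m + 3 - 2 = m + 1 by omega,
        show m + 3 + 1 = m + 4 by omega] at ih e1 ⊢
      push_cast at ih ⊢
      linear_combination ih + e1
  refine ⟨A₀, fun n hn => ?_⟩
  have k1 := key n hn
  have k2 := key (n + 1) (by omega)
  have e2 := h2 n hn
  obtain ⟨m, rfl⟩ : ∃ m, n = m + 2 := ⟨n - 2, by omega⟩
  simp only [show m + 2 - 1 = m + 1 by omega, show m + 2 - 2 = m by omega,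
    show m + 2 + 1 = m + 3 by omega, show m + 2 + 2 = m + 4 by omega,
    show m + 3 - 1 = m + 2 by omega, show m + 3 - 2 = m + 1 by omega,
    show m + 3 + 1 = m + 4 by omega] at k1 k2 e2 ⊢
  push_cast at k1 k2 ⊢
  constructor
  · linear_combination k1
  · linear_combination e2 - u (m + 2) * k1 - u (m + 2) * k2
end
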